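/- arXiv:1506.01362 — 2 statements merged into one kernel-verified Lean document; each statement's English description precedes it below -/
import Mathlib

section
/- Let $G_1$, $H$, $H_1, \ldots, H_r$ be connected graphs with $r \geq 2$, $G_1$ on $[m]$ with $m \geq 2$, and let $G_2 = H * (\bigsqcup_{i=1}^r H_i)$ with $H$ on $[t]$ and $H_i$ on $[n_i]$. Suppose every $n_i$ equals $1$ or is at least $m$. Then the condition '$G_1$ is complete and $(c_{G_2}(T)-1)(m-1) = |T|$ for all $T \in \mathcal{C}(G_2)$' holds if and only if: (a) for each $i$, $G_1$ is complete and $(c_{H_i}(T_i)-1)(m-1) = |T_i|$ for all $T_i \in \mathcal{C}(H_i)$; (b) $G_1$ is complete; (c) $t = (r-1)(m-1)$; and (d) for every nonempty $T \in \mathcal{C}(H)$, $(c_H(T)-1)(m-1) = |T| + \sum_{i=1}^r n_i$. -/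
open SimpleGraph Set

/-- Number of connected components of the induced subgraph of `G` on `s`. -/
noncomputable def nc {V : Type*} (G : SimpleGraph V) (s : Set V) : ℕ :=
  Nat.card (G.induce s).ConnectedComponent

/-- `T` has the cut point property for `G`: every `i ∈ T` is a cut point of the
induced subgraph on `Tᶜ ∪ {i}` (removing `i` increases the number of components). -/
def CutPointProperty {V : Type*} (G : SimpleGraph V) (T : Set V) : Prop :=
  ∀ i ∈ T, nc G (Tᶜ ∪ {i}) < nc G Tᶜ

/-- The join `G₁ * G₂` of two graphs on disjoint vertex sets. -/
def joinGraph {V₁ V₂ : Type*} (G₁ : SimpleGraph V₁) (G₂ : SimpleGraph V₂) :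
    SimpleGraph (V₁ ⊕ V₂) where
  Adj v w :=
    match v, w with
    | Sum.inl a, Sum.inl b => G₁.Adj a b
    | Sum.inr a, Sum.inr b => G₂.Adj a b
    | Sum.inl _, Sum.inr _ => True
    | Sum.inr _, Sum.inl _ => True
  symm := ⟨by rintro (a | a) (b | b) h <;> simp_all <;> exact h.symm⟩
  loopless := ⟨by rintro (a | a) h <;> simp_all⟩

/-- Disjoint union of an indexed family of graphs. -/
def sigmaGraph {ι : Type*} {V : ι → Type*} (G : ∀ i, SimpleGraph (V i)) :
    SimpleGraph (Σ i, V i) where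
  Adj v w := ∃ h : v.1 = w.1, (G w.1).Adj (h ▸ v.2) w.2
  symm := ⟨by
    rintro ⟨i, a⟩ ⟨j, b⟩ ⟨h, hab⟩
    dsimp at h hab ⊢
    subst h
    exact ⟨rfl, hab.symm⟩⟩
  loopless := ⟨by
    rintro ⟨i, a⟩ ⟨h, hab⟩
    dsimp at h hab
    exact (G i).irrefl hab⟩
/-- The corona `H ⊙ H'`: one copy of `H'` for each vertex `v` of `H`,
with every vertex of the copy joined to `v`. -/
def coronaGraph {V₁ V₂ : Type*} (H : SimpleGraph V₁) (H' : SimpleGraph V₂) :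
    SimpleGraph (V₁ ⊕ V₁ × V₂) where
  Adj v w :=
    match v, w with
    | Sum.inl a, Sum.inl b => H.Adj a b
    | Sum.inl a, Sum.inr p => a = p.1
    | Sum.inr p, Sum.inl b => p.1 = b
    | Sum.inr p, Sum.inr q => p.1 = q.1 ∧ H'.Adj p.2 q.2
  symm := ⟨by
    rintro (a | p) (b | q) h <;> dsimp at h ⊢
    · exact h.symm
    · exact h.symm
    · exact h.symm
    · exact ⟨h.1.symm, h.2.symm⟩⟩
  loopless := ⟨by rintro (a | p) h <;> simp_all⟩

/-- The whisker graph `W(H)`: a pendant vertex attached to each vertex of `H`. -/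
def whiskerGraph {V : Type*} (H : SimpleGraph V) : SimpleGraph (V ⊕ V) where
  Adj v w :=
    match v, w with
    | Sum.inl a, Sum.inl b => H.Adj a b
    | Sum.inl a, Sum.inr b => a = b
    | Sum.inr a, Sum.inl b => a = b
    | Sum.inr _, Sum.inr _ => False
  symm := ⟨by rintro (a | a) (b | b) h <;> simp_all; exact h.symm⟩
  loopless := ⟨by rintro (a | a) h <;> simp_all⟩

/-- `F` is (the vertex set of) a maximal clique of `G`. -/
def MaxClique {V : Type*} (G : SimpleGraph V) (F : Set V) : Prop :=
  Maximal G.IsClique F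

/-- A graph is chordal if every cycle of length at least 4 has a chord. -/
def IsChordal {V : Type*} (G : SimpleGraph V) : Prop :=
  ∀ (n : ℕ), 4 ≤ n → ∀ c : ℕ → V, Set.InjOn c (Set.Iio n) →
    (∀ i < n, G.Adj (c i) (c ((i + 1) % n))) →
    ∃ i < n, ∃ j < n, j ≠ i ∧ j ≠ (i + 1) % n ∧ i ≠ (j + 1) % n ∧ G.Adj (c i) (c j)

/-- A generalized block graph: a connected chordal graph in which any three distinct
maximal cliques with nonempty common intersection have all pairwise intersections equal. -/
def GenBlockGraph {V : Type*} (G : SimpleGraph V) : Prop :=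
  G.Connected ∧ IsChordal G ∧
    ∀ F₁ F₂ F₃ : Set V, MaxClique G F₁ → MaxClique G F₂ → MaxClique G F₃ →
      F₁ ≠ F₂ → F₁ ≠ F₃ → F₂ ≠ F₃ → (F₁ ∩ F₂ ∩ F₃).Nonempty →
      F₁ ∩ F₂ = F₁ ∩ F₃ ∧ F₁ ∩ F₂ = F₂ ∩ F₃

/-- `A` is a cut set of `G`: deleting `A` increases the number of connected components. -/
def IsCutSet {V : Type*} (G : SimpleGraph V) (A : Set V) : Prop :=
  nc G Set.univ < nc G Aᶜ

/-- `A` is an inclusion-minimal cut set of `G`. -/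
def IsMinCutSet {V : Type*} (G : SimpleGraph V) (A : Set V) : Prop :=
  IsCutSet G A ∧ ∀ B ⊂ A, ¬ IsCutSet G B

/-- `A` is a `t`-minimal cut set of `G`: a minimal cut set which is the common
intersection of exactly `t` maximal cliques of `G` and disjoint from all other
maximal cliques. -/
def IsTMinCut {V : Type*} (G : SimpleGraph V) (t : ℕ) (A : Set V) : Prop :=
  IsMinCutSet G A ∧
  {F : Set V | MaxClique G F ∧ A ⊆ F}.ncard = t ∧
  ⋂₀ {F : Set V | MaxClique G F ∧ A ⊆ F} = A ∧
  ∀ F : Set V, MaxClique G F → ¬ A ⊆ F → F ∩ A = ∅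

/-- `B` is a branch of the facet `F` in the clique complex of `G`. -/
def IsBranch {V : Type*} (G : SimpleGraph V) (F B : Set V) : Prop :=
  MaxClique G B ∧ B ≠ F ∧ ∀ H : Set V, MaxClique G H → H ≠ F → H ∩ F ⊆ B ∩ F

/-- `F` is a leaf of the clique complex of `G`. -/
def IsLeafClique {V : Type*} (G : SimpleGraph V) (F : Set V) : Prop :=
  MaxClique G F ∧ ((∀ F' : Set V, MaxClique G F' → F' = F) ∨ ∃ B, IsBranch G F B)

/-- The Ene–Herzog–Hibi–Qureshi combinatorial characterization of unmixedness of the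
binomial edge ideal of a pair `(G₁, G₂)`, taken as a definition. -/
def PairUnmixed {A B : Type*} (G₁ : SimpleGraph A) (m : ℕ) (G₂ : SimpleGraph B) : Prop :=
  G₁ = ⊤ ∧ ∀ T : Set B, CutPointProperty G₂ T → (nc G₂ Tᶜ - 1) * (m - 1) = T.ncard


section InfraHelpers
variable {V W : Type*}

lemma nc_map (G : SimpleGraph V) (G' : SimpleGraph W) (f : V → W) (hf : Function.Injective f)
    (hadj : ∀ a b, G'.Adj (f a) (f b) ↔ G.Adj a b) (s : Set W) (hs : s ⊆ Set.range f) :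
    nc G' s = nc G (f ⁻¹' s) := by
  have φ : G.induce (f ⁻¹' s) ≃g G'.induce s :=
    { toEquiv := (Equiv.Set.image f _ hf).trans
        (Equiv.setCongr (Set.image_preimage_eq_of_subset hs)),
      map_rel_iff' := by
        rintro ⟨a, ha⟩ ⟨b, hb⟩
        simp [Equiv.Set.image, Equiv.Set.imageOfInjOn, hadj] }
  exact (Nat.card_congr φ.connectedComponentEquiv).symm

lemma nc_eq_one_of_connected {G : SimpleGraph V} {s : Set V} (h : (G.induce s).Connected) :
    nc G s = 1 := by
  rw [nc, Nat.card_eq_one_iff_unique]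
  constructor
  · constructor
    intro c d
    refine ConnectedComponent.ind₂ (fun v w => ?_) c d
    exact ConnectedComponent.sound (h.preconnected v w)
  · exact ⟨(G.induce s).connectedComponentMk ⟨_, h.nonempty.some.2⟩⟩

lemma nc_univ_of_connected {G : SimpleGraph V} (h : G.Connected) : nc G Set.univ = 1 :=
  nc_eq_one_of_connected ((induceUnivIso G).connected_iff.mpr h)

lemma one_le_nc {G : SimpleGraph V} [Finite V] {s : Set V} (h : s.Nonempty) : 1 ≤ nc G s := by
  have : Nonempty ↥s := h.to_subtype
  have : Nonempty (G.induce s).ConnectedComponent := ⟨(G.induce s).connectedComponentMk this.some⟩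
  exact Nat.card_pos

lemma nc_empty (G : SimpleGraph V) : nc G (∅ : Set V) = 0 := by
  have : IsEmpty ↥(∅ : Set V) := by simp
  have : IsEmpty (G.induce (∅ : Set V)).ConnectedComponent :=
    ⟨fun c => c.ind (fun v => (Set.notMem_empty _ v.2).elim)⟩
  simp [nc, Nat.card_of_isEmpty]

lemma cpp_univ_false {G : SimpleGraph V} [Nonempty V] (h : CutPointProperty G Set.univ) :
    False := by
  have := h (Classical.arbitrary V) trivial
  rw [Set.compl_univ, nc_empty] at this
  omega

lemma nc_compl_ge_two {G : SimpleGraph V} [Finite V] {T : Set V} (hT : T.Nonempty)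
    (h : CutPointProperty G T) : 2 ≤ nc G Tᶜ := by
  obtain ⟨i, hi⟩ := hT
  have h1 := h i hi
  have h2 : 1 ≤ nc G (Tᶜ ∪ {i}) := one_le_nc ⟨i, Or.inr rfl⟩
  omega

lemma cpp_ne_univ {G : SimpleGraph V} [Nonempty V] {T : Set V} (h : CutPointProperty G T) :
    T ≠ Set.univ := fun hT => cpp_univ_false (hT ▸ h)

end InfraHelpers

section SigmaHelpers
variable {ι : Type*} {Vf : ι → Type*} (Gs : ∀ i, SimpleGraph (Vf i))

def sigmaHom (i : ι) : Gs i →g sigmaGraph Gs where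
  toFun := Sigma.mk i
  map_rel' := fun h => ⟨rfl, h⟩

lemma sigma_walk_eq {x y : Σ i, Vf i} (w : (sigmaGraph Gs).Walk x y) :
    (⟨x.1, (Gs x.1).connectedComponentMk x.2⟩ : Σ i, (Gs i).ConnectedComponent)
      = ⟨y.1, (Gs y.1).connectedComponentMk y.2⟩ := by
  induction w with
  | nil => rfl
  | @cons u v w hadj p ih =>
      refine Eq.trans ?_ ih
      obtain ⟨u1, u2⟩ := u
      obtain ⟨v1, v2⟩ := v
      obtain ⟨h, hadj'⟩ := hadj
      dsimp at h hadj' ⊢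
      subst h
      exact Sigma.ext rfl
        (heq_of_eq (SimpleGraph.ConnectedComponent.connectedComponentMk_eq_of_adj hadj'))

noncomputable def sigmaCC : (sigmaGraph Gs).ConnectedComponent ≃
    Σ i, (Gs i).ConnectedComponent where
  toFun := fun c => c.lift (fun x => ⟨x.1, (Gs x.1).connectedComponentMk x.2⟩)
    (fun v w p _ => sigma_walk_eq Gs p)
  invFun := fun p => p.2.map (sigmaHom Gs p.1)
  left_inv := by
    intro c
    refine c.ind (fun x => ?_)
    rfl
  right_inv := by
    rintro ⟨i, c⟩
    refine c.ind (fun v => ?_)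
    rfl

lemma nc_CC_sigma [Fintype ι] [∀ i, Finite (Vf i)] :
    Nat.card (sigmaGraph Gs).ConnectedComponent = ∑ i, Nat.card (Gs i).ConnectedComponent := by
  rw [Nat.card_congr (sigmaCC Gs)]
  letI : ∀ i, Fintype (Gs i).ConnectedComponent := fun i => Fintype.ofFinite _
  rw [Nat.card_eq_fintype_card, Fintype.card_sigma]
  simp [Nat.card_eq_fintype_card]

def sigmaInduceIso (s : Set (Σ i, Vf i)) :
    (sigmaGraph Gs).induce s ≃g sigmaGraph (fun i => (Gs i).induce (Sigma.mk i ⁻¹' s)) where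
  toFun := fun x => ⟨x.1.1, ⟨x.1.2, x.2⟩⟩
  invFun := fun y => ⟨⟨y.1, y.2.1⟩, y.2.2⟩
  left_inv := fun x => rfl
  right_inv := fun y => rfl
  map_rel_iff' := by
    rintro ⟨⟨i, v⟩, hv⟩ ⟨⟨j, w⟩, hw⟩
    constructor
    · rintro ⟨h, ha⟩
      dsimp at h ha ⊢
      subst h
      exact ⟨rfl, ha⟩
    · rintro ⟨h, ha⟩
      dsimp at h ha ⊢
      subst h
      exact ⟨rfl, ha⟩

lemma nc_sigma [Fintype ι] [∀ i, Fintype (Vf i)] (s : Set (Σ i, Vf i)) :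
    nc (sigmaGraph Gs) s = ∑ i, nc (Gs i) (Sigma.mk i ⁻¹' s) := by
  rw [nc, Nat.card_congr (sigmaInduceIso Gs s).connectedComponentEquiv, nc_CC_sigma]
  rfl

lemma natcard_sigma {α : ι → Type*} [Fintype ι] [∀ i, Finite (α i)] :
    Nat.card (Σ i, α i) = ∑ i, Nat.card (α i) := by
  letI := fun i => Fintype.ofFinite (α i)
  simp [Nat.card_eq_fintype_card]

lemma ncard_sigma_set [Fintype ι] [∀ i, Fintype (Vf i)] (u : Set (Σ i, Vf i)) :
    u.ncard = ∑ i, (Sigma.mk i ⁻¹' u).ncard := by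
  have e : ↥u ≃ Σ i, ↥(Sigma.mk i ⁻¹' u) :=
    ⟨fun x => ⟨x.1.1, x.1.2, x.2⟩, fun y => ⟨⟨y.1, y.2.1⟩, y.2.2⟩, fun x => rfl, fun y => rfl⟩
  rw [← Nat.card_coe_set_eq, Nat.card_congr e, natcard_sigma]
  simp [Nat.card_coe_set_eq]

end SigmaHelpers

section JoinHelpers
variable {A B : Type*} (H : SimpleGraph A) (K : SimpleGraph B)

lemma join_connected_of_meets (s : Set (A ⊕ B)) (ha : ∃ a, Sum.inl a ∈ s)
    (hb : ∃ b, Sum.inr b ∈ s) : ((joinGraph H K).induce s).Connected := by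
  obtain ⟨a0, ha0⟩ := ha
  obtain ⟨b0, hb0⟩ := hb
  have hlr : ∀ (a : A) (b : B), (joinGraph H K).Adj (Sum.inl a) (Sum.inr b) := fun a b => trivial
  have key : ∀ x : ↥s, ((joinGraph H K).induce s).Reachable x ⟨Sum.inr b0, hb0⟩ := by
    rintro ⟨(a | b), hx⟩
    · exact SimpleGraph.Adj.reachable (hlr a b0)
    · have h1 : ((joinGraph H K).induce s).Reachable ⟨Sum.inr b, hx⟩ ⟨Sum.inl a0, ha0⟩ :=
        SimpleGraph.Adj.reachable ((hlr a0 b).symm)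
      exact h1.trans (SimpleGraph.Adj.reachable (hlr a0 b0))
  haveI : Nonempty ↥s := ⟨⟨_, hb0⟩⟩
  refine SimpleGraph.Connected.mk ?_
  intro x y
  exact (key x).trans (key y).symm

lemma nc_join_meets (s : Set (A ⊕ B)) (ha : ∃ a, Sum.inl a ∈ s) (hb : ∃ b, Sum.inr b ∈ s) :
    nc (joinGraph H K) s = 1 :=
  nc_eq_one_of_connected (join_connected_of_meets H K s ha hb)

lemma nc_join_left (s : Set (A ⊕ B)) (hs : s ⊆ Set.range Sum.inl) :
    nc (joinGraph H K) s = nc H (Sum.inl ⁻¹' s) :=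
  nc_map H _ Sum.inl Sum.inl_injective (fun _ _ => Iff.rfl) s hs

lemma nc_join_right (s : Set (A ⊕ B)) (hs : s ⊆ Set.range Sum.inr) :
    nc (joinGraph H K) s = nc K (Sum.inr ⁻¹' s) :=
  nc_map K _ Sum.inr Sum.inr_injective (fun _ _ => Iff.rfl) s hs

lemma compl_union_inr (u : Set B) :
    (Set.range (Sum.inl : A → A ⊕ B) ∪ Sum.inr '' u)ᶜ = Sum.inr '' uᶜ := by
  ext (a | b) <;> simp

lemma compl_union_inl (u : Set A) :
    (Sum.inl '' u ∪ Set.range (Sum.inr : B → A ⊕ B))ᶜ = Sum.inl '' uᶜ := by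
  ext (a | b) <;> simp

end JoinHelpers

section MainHelpers
variable {V₀ : Type*} [Fintype V₀] {r : ℕ} {V : Fin r → Type*} [∀ i, Fintype (V i)]
  (H : SimpleGraph V₀) (Hi : ∀ i, SimpleGraph (V i))

lemma hsum_inr (w : Set (Σ i, V i)) :
    nc (joinGraph H (sigmaGraph Hi)) (Sum.inr '' w) = ∑ j, nc (Hi j) (Sigma.mk j ⁻¹' w) := by
  rw [nc_join_right _ _ _ (Set.image_subset_range _ _),
    Set.preimage_image_eq _ Sum.inr_injective, nc_sigma]

lemma hleft_inl (w : Set V₀) :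
    nc (joinGraph H (sigmaGraph Hi)) (Sum.inl '' w) = nc H w := by
  rw [nc_join_left _ _ _ (Set.image_subset_range _ _),
    Set.preimage_image_eq _ Sum.inl_injective]

lemma fib_ne {i : Fin r} (w : Set (Σ j, V j)) (x : V i) {j : Fin r} (hj : j ≠ i) :
    Sigma.mk j ⁻¹' (w ∪ {⟨i, x⟩}) = Sigma.mk j ⁻¹' w := by
  ext y
  simp [Sigma.mk.inj_iff, hj]

lemma fib_eq {i : Fin r} (w : Set (Σ j, V j)) (x : V i) :
    Sigma.mk i ⁻¹' (w ∪ {⟨i, x⟩}) = (Sigma.mk i ⁻¹' w) ∪ {x} := by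
  ext y
  simp [Sigma.mk.inj_iff]

lemma img_union_singleton {i : Fin r} (w : Set (Σ j, V j)) (x : V i) :
    Sum.inr '' w ∪ {(Sum.inr ⟨i, x⟩ : V₀ ⊕ Σ j, V j)} = Sum.inr '' (w ∪ {⟨i, x⟩}) := by
  rw [Set.image_union, Set.image_singleton]

lemma imgl_union_singleton (w : Set V₀) (a : V₀) :
    Sum.inl '' w ∪ {(Sum.inl a : V₀ ⊕ Σ j, V j)} = Sum.inl '' (w ∪ {a}) := by
  rw [Set.image_union, Set.image_singleton]

lemma cpp_case1 (hHi : ∀ i, (Hi i).Connected) (hr : 2 ≤ r) (u : Set (Σ i, V i)) :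
    CutPointProperty (joinGraph H (sigmaGraph Hi)) (Set.range Sum.inl ∪ Sum.inr '' u) ↔
      ∀ i, CutPointProperty (Hi i) (Sigma.mk i ⁻¹' u) := by
  have hTc := compl_union_inr (A := V₀) u
  constructor
  · intro h i x hx
    have hmem : (Sum.inr ⟨i, x⟩ : V₀ ⊕ Σ j, V j) ∈
        (Set.range Sum.inl ∪ Sum.inr '' u : Set (V₀ ⊕ Σ j, V j)) :=
      Or.inr ⟨⟨i, x⟩, hx, rfl⟩
    have h2 := h _ hmem
    rw [hTc, img_union_singleton, hsum_inr, hsum_inr,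
      ← Finset.add_sum_erase _ _ (Finset.mem_univ i),
      ← Finset.add_sum_erase _ _ (Finset.mem_univ i)] at h2
    have heq : ∀ j ∈ Finset.univ.erase i,
        nc (Hi j) (Sigma.mk j ⁻¹' (uᶜ ∪ {⟨i, x⟩})) = nc (Hi j) (Sigma.mk j ⁻¹' uᶜ) :=
      fun j hj => by rw [fib_ne _ _ (Finset.ne_of_mem_erase hj)]
    rw [Finset.sum_congr rfl heq, fib_eq] at h2
    have h3 := Nat.lt_of_add_lt_add_right h2
    simpa [Set.preimage_compl] using h3
  · intro h x hx
    haveI : ∀ i, Nonempty (V i) := fun i => (hHi i).nonempty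
    have hne : ∀ j, ((Sigma.mk j ⁻¹' u)ᶜ : Set (V j)).Nonempty := by
      intro j
      rcases Set.eq_empty_or_nonempty ((Sigma.mk j ⁻¹' u)ᶜ) with he | hne
      · exfalso
        exact cpp_univ_false (Set.compl_empty_iff.mp he ▸ h j)
      · exact hne
    have hucne : (uᶜ : Set (Σ j, V j)).Nonempty := by
      obtain ⟨y, hy⟩ := hne ⟨0, by omega⟩
      exact ⟨⟨_, y⟩, hy⟩
    have hge1 : ∀ j, 1 ≤ nc (Hi j) (Sigma.mk j ⁻¹' uᶜ) := fun j =>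
      one_le_nc (by rw [Set.preimage_compl]; exact hne j)
    have hger : 2 ≤ ∑ j, nc (Hi j) (Sigma.mk j ⁻¹' uᶜ) := by
      calc 2 ≤ r := hr
      _ = ∑ _j : Fin r, 1 := by simp
      _ ≤ _ := Finset.sum_le_sum (fun j _ => hge1 j)
    rcases x with a | b
    · rw [hTc]
      have hone : nc (joinGraph H (sigmaGraph Hi)) (Sum.inr '' uᶜ ∪ {Sum.inl a}) = 1 :=
        nc_join_meets _ _ _ ⟨a, Or.inr rfl⟩
          ⟨hucne.some, Or.inl (Set.mem_image_of_mem _ hucne.some_mem)⟩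
      rw [hone, hsum_inr]
      omega
    · obtain ⟨i, x⟩ := b
      have hbu : (⟨i, x⟩ : Σ j, V j) ∈ u := by
        rcases hx with h1 | h2
        · obtain ⟨a, ha⟩ := h1
          exact absurd ha (by simp)
        · obtain ⟨c, hc, hcc⟩ := h2
          exact (Sum.inr_injective hcc) ▸ hc
      rw [hTc, img_union_singleton, hsum_inr, hsum_inr]
      refine Finset.sum_lt_sum (fun j _ => ?_) ⟨i, Finset.mem_univ i, ?_⟩
      · by_cases hj : j = i
        · subst hj
          rw [fib_eq, Set.preimage_compl]
          exact (h j x hbu).le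
        · rw [fib_ne _ _ hj]
      · rw [fib_eq, Set.preimage_compl]
        exact h i x hbu

lemma cpp_case2 (hH : H.Connected) (u : Set V₀) (hu : u.Nonempty) :
    CutPointProperty (joinGraph H (sigmaGraph Hi)) (Sum.inl '' u ∪ Set.range Sum.inr) ↔
      CutPointProperty H u := by
  have hTc := compl_union_inl (B := Σ i, V i) u
  constructor
  · intro h a ha
    have h2 := h (Sum.inl a) (Or.inl (Set.mem_image_of_mem _ ha))
    rw [hTc, imgl_union_singleton, hleft_inl, hleft_inl] at h2
    exact h2
  · intro h x hx
    have h2ge : 2 ≤ nc H uᶜ := nc_compl_ge_two hu h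
    have hcne : (uᶜ : Set V₀).Nonempty := by
      rcases Set.eq_empty_or_nonempty (uᶜ : Set V₀) with he | hne
      · rw [he, nc_empty] at h2ge; omega
      · exact hne
    rcases x with a | b
    · have ha : a ∈ u := by
        rcases hx with h1 | h2
        · obtain ⟨c, hc, hcc⟩ := h1
          exact (Sum.inl_injective hcc) ▸ hc
        · obtain ⟨c, hc⟩ := h2
          exact absurd hc (by simp)
      rw [hTc, imgl_union_singleton, hleft_inl, hleft_inl]
      exact h a ha
    · rw [hTc]
      have hone : nc (joinGraph H (sigmaGraph Hi)) (Sum.inl '' uᶜ ∪ {Sum.inr b}) = 1 :=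
        nc_join_meets _ _ _ ⟨hcne.some, Or.inl (Set.mem_image_of_mem _ hcne.some_mem)⟩
          ⟨b, Or.inr rfl⟩
      rw [hone, hleft_inl]
      omega

lemma cpp_cases {T : Set (V₀ ⊕ Σ i, V i)} (hT : T.Nonempty)
    (h : CutPointProperty (joinGraph H (sigmaGraph Hi)) T) :
    Set.range Sum.inl ⊆ T ∨ Set.range Sum.inr ⊆ T := by
  by_contra hc
  push_neg at hc
  obtain ⟨h1, h2⟩ := hc
  obtain ⟨x1, hx1, hx1T⟩ := Set.not_subset.mp h1
  obtain ⟨x2, hx2, hx2T⟩ := Set.not_subset.mp h2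
  obtain ⟨a, rfl⟩ := hx1
  obtain ⟨b, rfl⟩ := hx2
  have hone : nc (joinGraph H (sigmaGraph Hi)) Tᶜ = 1 :=
    nc_join_meets _ _ _ ⟨a, hx1T⟩ ⟨b, hx2T⟩
  have h2' := nc_compl_ge_two hT h
  omega


lemma nc_complT1 (u : Set (Σ i, V i)) :
    nc (joinGraph H (sigmaGraph Hi)) ((Set.range Sum.inl ∪ Sum.inr '' u)ᶜ) =
      ∑ j, nc (Hi j) ((Sigma.mk j ⁻¹' u)ᶜ) := by
  rw [compl_union_inr, hsum_inr]
  exact Finset.sum_congr rfl fun j _ => by rw [Set.preimage_compl]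

lemma nc_complT2 (u : Set V₀) :
    nc (joinGraph H (sigmaGraph Hi)) ((Sum.inl '' u ∪ Set.range Sum.inr)ᶜ) = nc H uᶜ := by
  rw [compl_union_inl, hleft_inl]

lemma ncard_range_inl :
    (Set.range (Sum.inl : V₀ → V₀ ⊕ Σ i, V i)).ncard = Fintype.card V₀ := by
  rw [← Set.image_univ, Set.ncard_image_of_injective _ Sum.inl_injective, Set.ncard_univ,
    Nat.card_eq_fintype_card]

lemma ncard_T1 (u : Set (Σ i, V i)) :
    (Set.range Sum.inl ∪ Sum.inr '' u : Set (V₀ ⊕ Σ i, V i)).ncard =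
      Fintype.card V₀ + ∑ i, (Sigma.mk i ⁻¹' u).ncard := by
  have hd : Disjoint (Set.range (Sum.inl : V₀ → V₀ ⊕ Σ i, V i)) (Sum.inr '' u) :=
    (Set.isCompl_range_inl_range_inr.disjoint).mono_right (Set.image_subset_range _ _)
  rw [Set.ncard_union_eq hd, ncard_range_inl,
    Set.ncard_image_of_injective _ Sum.inr_injective, ncard_sigma_set]

lemma ncard_T2 (u : Set V₀) :
    (Sum.inl '' u ∪ Set.range Sum.inr : Set (V₀ ⊕ Σ i, V i)).ncard =
      u.ncard + ∑ i, Fintype.card (V i) := by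
  have hd : Disjoint (Sum.inl '' u) (Set.range (Sum.inr : (Σ i, V i) → V₀ ⊕ Σ i, V i)) :=
    (Set.isCompl_range_inl_range_inr.disjoint).mono_left (Set.image_subset_range _ _)
  rw [Set.ncard_union_eq hd, Set.ncard_image_of_injective _ Sum.inl_injective,
    ← Set.image_univ, Set.ncard_image_of_injective _ Sum.inr_injective, Set.ncard_univ,
    Nat.card_eq_fintype_card, Fintype.card_sigma]

end MainHelpers

/-- unmixedness of `J_{G₁, H * (⊔ᵢ Hᵢ)}` is equivalent to conditions
(a)–(d). -/
theorem stmt15 {VG : Type*} [Fintype VG] {V₀ : Type*} [Fintype V₀]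
    {r : ℕ} (hr : 2 ≤ r) {V : Fin r → Type*} [∀ i, Fintype (V i)]
    (G₁ : SimpleGraph VG) (H : SimpleGraph V₀) (Hi : ∀ i, SimpleGraph (V i))
    (hG₁ : G₁.Connected) (hH : H.Connected) (hHi : ∀ i, (Hi i).Connected)
    (hm : 2 ≤ Fintype.card VG)
    (hni : ∀ i, Fintype.card (V i) = 1 ∨ Fintype.card VG ≤ Fintype.card (V i)) :
    PairUnmixed G₁ (Fintype.card VG) (joinGraph H (sigmaGraph Hi)) ↔
      ((∀ i, PairUnmixed G₁ (Fintype.card VG) (Hi i)) ∧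
       G₁ = ⊤ ∧
       Fintype.card V₀ = (r - 1) * (Fintype.card VG - 1) ∧
       (∀ T : Set V₀, T.Nonempty → CutPointProperty H T →
          (nc H Tᶜ - 1) * (Fintype.card VG - 1) =
            T.ncard + ∑ i, Fintype.card (V i))) := by
  classical
  haveI : ∀ i, Nonempty (V i) := fun i => (hHi i).nonempty
  set m := Fintype.card VG with hmdef
  constructor
  · rintro ⟨htop, heq⟩
    -- key equation (c)
    have hkey : (r - 1) * (m - 1) = Fintype.card V₀ := by
      have hcpp : CutPointProperty (joinGraph H (sigmaGraph Hi))
          (Set.range Sum.inl ∪ Sum.inr '' (∅ : Set (Σ i, V i))) := by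
        refine (cpp_case1 H Hi hHi hr ∅).mpr ?_
        intro i z hz
        simp at hz
      have h2 := heq _ hcpp
      rw [nc_complT1] at h2
      have hs : ∀ j : Fin r, nc (Hi j) ((Sigma.mk j ⁻¹' (∅ : Set (Σ i, V i)))ᶜ) = 1 := by
        intro j
        rw [Set.preimage_empty, Set.compl_empty]
        exact nc_univ_of_connected (hHi j)
      rw [Finset.sum_congr rfl (fun j _ => hs j)] at h2
      simp only [Finset.sum_const, Finset.card_univ, Fintype.card_fin, smul_eq_mul, mul_one,
        Set.image_empty, Set.union_empty] at h2
      rw [ncard_range_inl] at h2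
      exact h2
    refine ⟨?_, htop, hkey.symm, ?_⟩
    · -- condition (a)
      intro i
      refine ⟨htop, ?_⟩
      intro T' hT'
      have hui : Sigma.mk i ⁻¹' (Sigma.mk i '' T') = T' :=
        Set.preimage_image_eq _ sigma_mk_injective
      have huj : ∀ j, j ≠ i → Sigma.mk j ⁻¹' (Sigma.mk i '' T') = ∅ := by
        intro j hj
        refine Set.eq_empty_iff_forall_notMem.mpr ?_
        rintro y ⟨x, hx, hxy⟩
        exact hj (congrArg Sigma.fst hxy).symm
      have hcpp : CutPointProperty (joinGraph H (sigmaGraph Hi))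
          (Set.range Sum.inl ∪ Sum.inr '' (Sigma.mk i '' T')) := by
        refine (cpp_case1 H Hi hHi hr _).mpr ?_
        intro j
        by_cases hj : j = i
        · subst hj; rw [hui]; exact hT'
        · rw [huj j hj]; intro z hz; simp at hz
      have h2 := heq _ hcpp
      rw [nc_complT1, ncard_T1] at h2
      rw [← Finset.add_sum_erase _ _ (Finset.mem_univ i), hui] at h2
      have hs : ∀ j ∈ Finset.univ.erase i,
          nc (Hi j) ((Sigma.mk j ⁻¹' (Sigma.mk i '' T'))ᶜ) = 1 := by
        intro j hj
        rw [huj j (Finset.ne_of_mem_erase hj), Set.compl_empty]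
        exact nc_univ_of_connected (hHi j)
      rw [Finset.sum_congr rfl hs, Finset.sum_const, Finset.card_erase_of_mem (Finset.mem_univ i),
        Finset.card_univ, Fintype.card_fin, smul_eq_mul, mul_one] at h2
      rw [← Finset.add_sum_erase _ _ (Finset.mem_univ i), hui,
        Finset.sum_eq_zero (fun j hj => by
          rw [huj j (Finset.ne_of_mem_erase hj), Set.ncard_empty]), add_zero] at h2
      have hge : 1 ≤ nc (Hi i) T'ᶜ :=
        one_le_nc (Set.nonempty_compl.mpr (cpp_ne_univ hT'))
      have hsplit : nc (Hi i) T'ᶜ + (r - 1) - 1 = (nc (Hi i) T'ᶜ - 1) + (r - 1) := by omega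
      rw [hsplit, Nat.add_mul, hkey] at h2
      omega
    · -- condition (d)
      intro T₀ hne hcpp0
      have hcpp := (cpp_case2 H Hi hH T₀ hne).mpr hcpp0
      have h2 := heq _ hcpp
      rw [nc_complT2, ncard_T2] at h2
      exact h2
  · rintro ⟨ha, htop, hc, hd⟩
    refine ⟨htop, ?_⟩
    intro T hcpp
    rcases Set.eq_empty_or_nonempty T with rfl | hTne
    · have h1 : nc (joinGraph H (sigmaGraph Hi)) Set.univ = 1 :=
        nc_join_meets _ _ _ ⟨hH.nonempty.some, trivial⟩
          ⟨⟨⟨0, by omega⟩, Classical.arbitrary _⟩, trivial⟩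
      rw [Set.compl_empty, h1]
      simp
    · rcases cpp_cases H Hi hTne hcpp with h1 | h2
      · have hT : T = Set.range Sum.inl ∪ Sum.inr '' (Sum.inr ⁻¹' T) := by
          ext x
          rcases x with a | b
          · simp [h1 (Set.mem_range_self a)]
          · simp
        rw [hT] at hcpp ⊢
        have hcppi := (cpp_case1 H Hi hHi hr _).mp hcpp
        have heqi : ∀ j, (nc (Hi j) ((Sigma.mk j ⁻¹' (Sum.inr ⁻¹' T))ᶜ) - 1) * (m - 1) =
            (Sigma.mk j ⁻¹' (Sum.inr ⁻¹' T)).ncard := fun j => (ha j).2 _ (hcppi j)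
        have hge : ∀ j, 1 ≤ nc (Hi j) ((Sigma.mk j ⁻¹' (Sum.inr ⁻¹' T))ᶜ) := fun j =>
          one_le_nc (Set.nonempty_compl.mpr (cpp_ne_univ (hcppi j)))
        rw [nc_complT1, ncard_T1]
        have hsum : ∑ j, nc (Hi j) ((Sigma.mk j ⁻¹' (Sum.inr ⁻¹' T))ᶜ) =
            (∑ j, (nc (Hi j) ((Sigma.mk j ⁻¹' (Sum.inr ⁻¹' T))ᶜ) - 1)) + r := by
          calc ∑ j, nc (Hi j) ((Sigma.mk j ⁻¹' (Sum.inr ⁻¹' T))ᶜ)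
              = ∑ j, ((nc (Hi j) ((Sigma.mk j ⁻¹' (Sum.inr ⁻¹' T))ᶜ) - 1) + 1) :=
                Finset.sum_congr rfl (fun j _ => by have := hge j; omega)
            _ = (∑ j, (nc (Hi j) ((Sigma.mk j ⁻¹' (Sum.inr ⁻¹' T))ᶜ) - 1)) + ∑ _j : Fin r, 1 :=
                Finset.sum_add_distrib
            _ = _ := by simp
        have hr1 : (∑ j, nc (Hi j) ((Sigma.mk j ⁻¹' (Sum.inr ⁻¹' T))ᶜ)) - 1 =
            (∑ j, (nc (Hi j) ((Sigma.mk j ⁻¹' (Sum.inr ⁻¹' T))ᶜ) - 1)) + (r - 1) := by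
          omega
        rw [hr1, Nat.add_mul, Finset.sum_mul, Finset.sum_congr rfl (fun j _ => heqi j), ← hc]
        exact Nat.add_comm _ _
      · have hT : T = Sum.inl '' (Sum.inl ⁻¹' T) ∪ Set.range Sum.inr := by
          ext x
          rcases x with a | b
          · simp
          · simp [h2 (Set.mem_range_self b)]
        rcases Set.eq_empty_or_nonempty (Sum.inl ⁻¹' T) with he | hune
        · exfalso
          have h2' := nc_compl_ge_two hTne hcpp
          have hone : nc (joinGraph H (sigmaGraph Hi)) Tᶜ = 1 := by
            rw [hT, compl_union_inl, he, Set.compl_empty, hleft_inl]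
            exact nc_univ_of_connected hH
          omega
        · rw [hT] at hcpp ⊢
          have hcppH := (cpp_case2 H Hi hH _ hune).mp hcpp
          rw [nc_complT2, ncard_T2]
          exact hd _ hune hcppH
end

section
/- Let $G$ be a connected generalized block graph on $[n]$, $A$ a $(q+1)$-minimal cut set of $G$ (the common intersection of the leaf clique $F_c$ and its branches $F_{t_1},\ldots,F_{t_q}$), and let $G'$ be obtained from $G$ by replacing the cliques $F_c, F_{t_1}, \ldots, F_{t_q}$ by a single clique on $F_c \cup \bigcup_{j=1}^q F_{t_j}$. Then for every $T \in \mathcal{C}(G)$: $A \not\subseteq T$ if and only if $A \cap T = \emptyset$. -/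
open SimpleGraph Set

/-- Every clique in a finite graph extends to a maximal clique. -/
lemma exists_maxClique {V : Type*} [Fintype V] (G : SimpleGraph V) (s : Set V)
    (hs : G.IsClique s) : ∃ F, MaxClique G F ∧ s ⊆ F := by
  obtain ⟨B, hB, hBmax⟩ := Set.Finite.exists_maximalFor (f := id)
    {B : Set V | G.IsClique B ∧ s ⊆ B} (Set.toFinite _) ⟨s, hs, subset_rfl⟩
  refine ⟨B, ⟨hB.1, fun C hC hBC => ?_⟩, hB.2⟩
  exact hBmax ⟨hC, hB.2.trans hBC⟩ hBC

/-- Key reachability lemma: if every neighbor of `i` is `a` or adjacent to `a`,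
then adding `i` to `s` does not merge components. -/
lemma reach_aux {V : Type*} (G : SimpleGraph V) (s : Set V) (i a : V)
    (hi : i ∉ s) (ha : a ∈ s) (hnb : ∀ v, G.Adj i v → v = a ∨ G.Adj v a) :
    ∀ {x y : ↥(s ∪ {i})} (_ : (G.induce (s ∪ {i})).Walk x y) (hy : y.val ∈ s),
      (∀ hx : x.val ∈ s, (G.induce s).Reachable ⟨x.val, hx⟩ ⟨y.val, hy⟩) ∧
      (x.val = i → (G.induce s).Reachable ⟨a, ha⟩ ⟨y.val, hy⟩) := by
  intro x y w
  induction w with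
  | nil =>
    intro hy
    exact ⟨fun hx => Reachable.refl _, fun hx => absurd (hx ▸ hy) hi⟩
  | @cons u v z hadj w ih =>
    intro hy
    have hadj' : G.Adj u.val v.val := hadj
    rcases v.property with hv | hv
    · -- v.val ∈ s
      have IH := (ih hy).1 hv
      refine ⟨fun hx => ?_, fun hx => ?_⟩
      · exact (SimpleGraph.Adj.reachable (by exact hadj' : (G.induce s).Adj ⟨u.val, hx⟩ ⟨v.val, hv⟩)).trans IH
      · -- u.val = i, so v is a neighbor of i
        rcases hnb v.val (by simpa [hx] using hadj') with h | h
        · rw [show (⟨a, ha⟩ : ↥s) = ⟨v.val, hv⟩ from Subtype.ext h.symm]; exact IH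
        · exact (SimpleGraph.Adj.reachable (by exact h.symm : (G.induce s).Adj ⟨a, ha⟩ ⟨v.val, hv⟩)).trans IH
    · -- v.val = i
      simp only [Set.mem_singleton_iff] at hv
      have IH := (ih hy).2 hv
      refine ⟨fun hx => ?_, fun hx => ?_⟩
      · -- u is a neighbor of i
        rcases hnb u.val (by simpa [hv] using hadj'.symm) with h | h
        · rw [show (⟨u.val, hx⟩ : ↥s) = ⟨a, ha⟩ from Subtype.ext h]; exact IH
        · exact (SimpleGraph.Adj.reachable (by exact h : (G.induce s).Adj ⟨u.val, hx⟩ ⟨a, ha⟩)).trans IH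
      · rw [hx, hv] at hadj'
        exact (G.loopless.irrefl i hadj').elim

/-- in a connected generalized block graph, for a `(q+1)`-minimal cut set
`A` obtained from a leaf and its branches, every `T ∈ 𝒞(G)` satisfies
`A ⊄ T ↔ A ∩ T = ∅`. -/
theorem stmt17 {V : Type*} [Fintype V] (G : SimpleGraph V)
    (hG : GenBlockGraph G)
    {q : ℕ} (hq : 1 ≤ q) (A : Set V) (hA : IsTMinCut G (q + 1) A)
    (T : Set V) (hT : CutPointProperty G T) :
    ¬ A ⊆ T ↔ A ∩ T = ∅ := by
  obtain ⟨⟨hcut, _⟩, hcard, hinter, hdisj⟩ := hA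
  -- A is nonempty, since ∅ is not a cut set
  have hAne : A.Nonempty := by
    rw [Set.nonempty_iff_ne_empty]
    rintro rfl
    rw [IsCutSet, Set.compl_empty] at hcut
    exact lt_irrefl _ hcut
  -- A is contained in some maximal clique, hence is a clique
  have hF0 : ∃ F, MaxClique G F ∧ A ⊆ F := by
    have h0 : {F : Set V | MaxClique G F ∧ A ⊆ F}.Nonempty := by
      apply Set.nonempty_of_ncard_ne_zero
      rw [hcard]; omega
    obtain ⟨F, hF⟩ := h0
    exact ⟨F, hF⟩
  obtain ⟨F0, hF0max, hAF0⟩ := hF0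
  have hAclique : G.IsClique A := hF0max.1.subset hAF0
  constructor
  · -- hard direction
    intro hns
    by_contra hne
    rw [← Ne, ← Set.nonempty_iff_ne_empty] at hne
    obtain ⟨i, hiA, hiT⟩ := hne
    obtain ⟨b, hbA, hbT⟩ := Set.not_subset.mp hns
    have hib : i ≠ b := fun h => hbT (h ▸ hiT)
    -- every maximal clique containing i contains A
    have hcliqueA : ∀ F, MaxClique G F → i ∈ F → A ⊆ F := by
      intro F hF hiF
      by_contra hnsub
      have := hdisj F hF hnsub
      exact absurd this (by
        rw [← Ne, ← Set.nonempty_iff_ne_empty]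
        exact ⟨i, hiF, hiA⟩)
    -- every neighbor of i is b or adjacent to b
    have hnb : ∀ v, G.Adj i v → v = b ∨ G.Adj v b := by
      intro v hv
      obtain ⟨F, hFmax, hsubF⟩ := exists_maxClique G {i, v}
        ((SimpleGraph.isClique_pair).mpr (fun _ => hv))
      have hAF : A ⊆ F := hcliqueA F hFmax (hsubF (by simp))
      by_cases h : v = b
      · exact Or.inl h
      · exact Or.inr (hFmax.1 (hsubF (by simp)) (hAF hbA) h)
    -- the component map is injective, so nc Tᶜ ≤ nc (Tᶜ ∪ {i})
    have hile : (Tᶜ : Set V) ⊆ Tᶜ ∪ {i} := Set.subset_union_left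
    set f : (G.induce (Tᶜ : Set V)).ConnectedComponent →
        (G.induce ((Tᶜ : Set V) ∪ {i})).ConnectedComponent :=
      SimpleGraph.ConnectedComponent.map (G.induceHomOfLE hile).toHom with hf
    have hinj : Function.Injective f := by
      intro C D
      refine SimpleGraph.ConnectedComponent.ind₂ (fun u v h => ?_) C D
      obtain ⟨w⟩ := SimpleGraph.ConnectedComponent.exact h
      have hkey := (reach_aux G (Tᶜ : Set V) i b (by simp [hiT]) hbT hnb w
        (show ((G.induceHomOfLE hile) v).val ∈ (Tᶜ : Set V) from v.property)).1
        u.property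
      exact SimpleGraph.ConnectedComponent.sound hkey
    have hle : nc G (Tᶜ : Set V) ≤ nc G ((Tᶜ : Set V) ∪ {i}) :=
      Nat.card_le_card_of_injective f hinj
    exact absurd (hT i hiT) (not_lt.mpr hle)
  · intro h hsub
    obtain ⟨x, hx⟩ := hAne
    have : x ∈ A ∩ T := ⟨hx, hsub hx⟩
    rw [h] at this
    exact this
end
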